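/- Virial theorem for the atomic M"uller functional: if γ is a minimizer of the relaxed atomic M"uller problem (one nucleus of charge Z at the origin), then 2·(1/2)Tr(-∇²γ) = Tr(Z|r|^{-1}γ) - D(ρ_γ, ρ_γ) + X(γ^{1/2}). -/

import Mathlib

open MeasureTheory

noncomputable section

abbrev E3 := EuclideanSpace ℝ (Fin 3)

/-- Exchange energy `X(δ) = (1/2) ∬ |δ(r,r')|²/|r-r'| dr dr'`. -/
def exchangeR (k : E3 → E3 → ℂ) : ℝ :=
  (1 / 2) * ∫ p : E3 × E3, ‖k p.1 p.2‖ ^ 2 / dist p.1 p.2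

/-- Kinetic energy `Tr(-∇² γ) = ∬ |∇_r γ^{1/2}(r,r')|² dr dr'` in terms of the
square-root kernel `k = γ^{1/2}(·,·)`. -/
def kineticR (k : E3 → E3 → ℂ) : ℝ :=
  ∫ p : E3 × E3, ‖fderiv ℝ (fun r => k r p.2) p.1‖ ^ 2

/-- Particle density `ρ_γ(r) = γ(r,r) = ∫ |γ^{1/2}(r,r')|² dr'`. -/
def rhoF (k : E3 → E3 → ℂ) (r : E3) : ℝ := ∫ r' : E3, ‖k r r'‖ ^ 2

/-- `Tr γ = ∬ |γ^{1/2}(r,r')|² dr dr'`. -/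
def traceR (k : E3 → E3 → ℂ) : ℝ := ∫ p : E3 × E3, ‖k p.1 p.2‖ ^ 2

/-- Direct Coulomb energy `D(ρ,μ) = (1/2) ∬ ρ(r) μ(r')/|r-r'| dr dr'`. -/
def dirD (ρ μ : E3 → ℝ) : ℝ := (1 / 2) * ∫ p : E3 × E3, ρ p.1 * μ p.2 / dist p.1 p.2

/-- `k` is the kernel of the square root `γ^{1/2}` of an admissible density matrix
`0 ≤ γ ≤ 1` with finite kinetic energy: `k` is hermitian, Hilbert–Schmidt, has finite
kinetic energy, and the quadratic form of `γ = (γ^{1/2})²` is bounded by `1`. -/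
structure IsSqrtDM (k : E3 → E3 → ℂ) : Prop where
  herm : ∀ r r', k r r' = starRingEnd ℂ (k r' r)
  hs : Integrable (fun p : E3 × E3 => ‖k p.1 p.2‖ ^ 2)
  kin : Integrable (fun p : E3 × E3 => ‖fderiv ℝ (fun r => k r p.2) p.1‖ ^ 2)
  diff : ∀ r', Differentiable ℝ (fun r => k r r')
  le_one : ∀ f : E3 → ℂ, MemLp f 2 (volume : Measure E3) →
    (∫ s : E3, ‖∫ r' : E3, k s r' * f r'‖ ^ 2) ≤ ∫ r : E3, ‖f r‖ ^ 2

/-- Coulomb potential of `K` nuclei of charges `Zs j` at positions `R j`. -/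
def coulombV {K : ℕ} (Zs : Fin K → ℝ) (R : Fin K → E3) (r : E3) : ℝ :=
  ∑ j, Zs j / dist r (R j)

/-- The Müller functional (in atomic units) with self-energy correction,
`Ê^M(γ) = (1/2)Tr(-∇²γ) - ∫ V_c ρ_γ + D(ρ_γ,ρ_γ) - X(γ^{1/2}) + (1/8) Tr γ`,
expressed via the square-root kernel `k = γ^{1/2}(·,·)`. -/
def EMhat {K : ℕ} (Zs : Fin K → ℝ) (R : Fin K → E3) (k : E3 → E3 → ℂ) : ℝ :=
  (1 / 2) * kineticR k - (∫ r : E3, coulombV Zs R r * rhoF k r) +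
    dirD (rhoF k) (rhoF k) - exchangeR k + (1 / 8) * traceR k

/-- The free (`Z = 0`) Müller functional
`E^M(γ) = (1/2)Tr(-∇²γ) + D(ρ_γ,ρ_γ) - X(γ^{1/2})`. -/
def EM0 (k : E3 → E3 → ℂ) : ℝ :=
  (1 / 2) * kineticR k + dirD (rhoF k) (rhoF k) - exchangeR k


/-! ### Auxiliary machinery for the virial theorem: scaling of kernels -/

instance : (volume : Measure (E3 × E3)).IsAddHaarMeasure := by
  rw [MeasureTheory.Measure.volume_eq_prod]
  exact MeasureTheory.Measure.prod.instIsAddHaarMeasure _ _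

lemma finrank_E3 : Module.finrank ℝ E3 = 3 := by simp

lemma finrank_E3sq : Module.finrank ℝ (E3 × E3) = 6 := by
  simp [Module.finrank_prod]

lemma int3' (g : E3 → ℝ) {c : ℝ} (hc : 0 < c) :
    ∫ x : E3, g (c • x) = (c ^ 3)⁻¹ * ∫ x : E3, g x := by
  have := MeasureTheory.Measure.integral_comp_smul_of_nonneg
    (volume : Measure E3) g c (hR := hc.le)
  simpa [finrank_E3, smul_eq_mul] using this

lemma int3C (g : E3 → ℂ) {c : ℝ} (hc : 0 < c) :
    ∫ x : E3, g (c • x) = ((c ^ 3)⁻¹ : ℝ) • ∫ x : E3, g x := by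
  have := MeasureTheory.Measure.integral_comp_smul_of_nonneg
    (volume : Measure E3) g c (hR := hc.le)
  simpa [finrank_E3] using this

lemma int6' (g : E3 × E3 → ℝ) {c : ℝ} (hc : 0 < c) :
    ∫ p : E3 × E3, g (c • p.1, c • p.2) = (c ^ 6)⁻¹ * ∫ p : E3 × E3, g p := by
  have := MeasureTheory.Measure.integral_comp_smul_of_nonneg
    (volume : Measure (E3 × E3)) g c (hR := hc.le)
  simpa [finrank_E3sq, smul_eq_mul, Prod.smul_def] using this

/-- The scaled square-root kernel, corresponding to `γ_λ(x,x') = λ³ γ(λx, λx')`. -/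
def scaleK (c : ℝ) (k : E3 → E3 → ℂ) : E3 → E3 → ℂ :=
  fun x y => (c : ℂ) ^ 3 * k (c • x) (c • y)

lemma norm_cpow3 {c : ℝ} (hc : 0 < c) : ‖((c : ℂ)) ^ 3‖ = c ^ 3 := by
  rw [norm_pow, Complex.norm_real, Real.norm_eq_abs, abs_of_pos hc]

lemma norm_scaleK {c : ℝ} (hc : 0 < c) (k : E3 → E3 → ℂ) (x y : E3) :
    ‖scaleK c k x y‖ ^ 2 = c ^ 6 * ‖k (c • x) (c • y)‖ ^ 2 := by
  rw [scaleK, norm_mul, norm_cpow3 hc]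
  ring

lemma traceR_scaleK {c : ℝ} (hc : 0 < c) (k : E3 → E3 → ℂ) :
    traceR (scaleK c k) = traceR k := by
  unfold traceR
  calc ∫ p : E3 × E3, ‖scaleK c k p.1 p.2‖ ^ 2
      = ∫ p : E3 × E3, c ^ 6 * ‖k (c • p.1) (c • p.2)‖ ^ 2 :=
        integral_congr_ae (ae_of_all _ fun p => norm_scaleK hc k p.1 p.2)
    _ = c ^ 6 * ∫ p : E3 × E3, ‖k (c • p.1) (c • p.2)‖ ^ 2 := integral_const_mul _ _
    _ = c ^ 6 * ((c ^ 6)⁻¹ * ∫ p : E3 × E3, ‖k p.1 p.2‖ ^ 2) := by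
        rw [int6' (fun q => ‖k q.1 q.2‖ ^ 2) hc]
    _ = ∫ p : E3 × E3, ‖k p.1 p.2‖ ^ 2 := by
        field_simp

lemma rhoF_scaleK {c : ℝ} (hc : 0 < c) (k : E3 → E3 → ℂ) (r : E3) :
    rhoF (scaleK c k) r = c ^ 3 * rhoF k (c • r) := by
  unfold rhoF
  calc ∫ r' : E3, ‖scaleK c k r r'‖ ^ 2
      = ∫ r' : E3, c ^ 6 * ‖k (c • r) (c • r')‖ ^ 2 :=
        integral_congr_ae (ae_of_all _ fun r' => norm_scaleK hc k r r')
    _ = c ^ 6 * ∫ r' : E3, ‖k (c • r) (c • r')‖ ^ 2 := integral_const_mul _ _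
    _ = c ^ 6 * ((c ^ 3)⁻¹ * ∫ s : E3, ‖k (c • r) s‖ ^ 2) := by
        rw [int3' (fun s => ‖k (c • r) s‖ ^ 2) hc]
    _ = c ^ 3 * ∫ s : E3, ‖k (c • r) s‖ ^ 2 := by
        field_simp

lemma coulomb_scaleK {c : ℝ} (hc : 0 < c) (Z : ℝ) (k : E3 → E3 → ℂ) :
    ∫ r : E3, Z / ‖r‖ * rhoF (scaleK c k) r = c * ∫ r : E3, Z / ‖r‖ * rhoF k r := by
  have hpt : ∀ r : E3, Z / ‖r‖ * rhoF (scaleK c k) r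
      = c ^ 4 * (Z / ‖c • r‖ * rhoF k (c • r)) := by
    intro r
    rw [rhoF_scaleK hc, norm_smul, Real.norm_eq_abs, abs_of_pos hc]
    rcases eq_or_ne (‖r‖) 0 with h0 | h0
    · simp [h0]
    · field_simp
  calc ∫ r : E3, Z / ‖r‖ * rhoF (scaleK c k) r
      = ∫ r : E3, c ^ 4 * (Z / ‖c • r‖ * rhoF k (c • r)) :=
        integral_congr_ae (ae_of_all _ hpt)
    _ = c ^ 4 * ∫ r : E3, Z / ‖c • r‖ * rhoF k (c • r) := integral_const_mul _ _
    _ = c ^ 4 * ((c ^ 3)⁻¹ * ∫ s : E3, Z / ‖s‖ * rhoF k s) := by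
        rw [int3' (fun s => Z / ‖s‖ * rhoF k s) hc]
    _ = c * ∫ s : E3, Z / ‖s‖ * rhoF k s := by
        field_simp

lemma dirD_scaleK {c : ℝ} (hc : 0 < c) (k : E3 → E3 → ℂ) :
    dirD (rhoF (scaleK c k)) (rhoF (scaleK c k)) = c * dirD (rhoF k) (rhoF k) := by
  unfold dirD
  have hpt : ∀ p : E3 × E3,
      rhoF (scaleK c k) p.1 * rhoF (scaleK c k) p.2 / dist p.1 p.2
        = c ^ 7 * (rhoF k (c • p.1) * rhoF k (c • p.2) / dist (c • p.1) (c • p.2)) := by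
    intro p
    rw [rhoF_scaleK hc, rhoF_scaleK hc, dist_smul₀, Real.norm_eq_abs, abs_of_pos hc]
    rcases eq_or_ne (dist p.1 p.2) 0 with h0 | h0
    · simp [h0]
    · field_simp
  rw [integral_congr_ae (ae_of_all _ hpt), integral_const_mul,
    int6' (fun q => rhoF k q.1 * rhoF k q.2 / dist q.1 q.2) hc]
  field_simp

lemma exchangeR_scaleK {c : ℝ} (hc : 0 < c) (k : E3 → E3 → ℂ) :
    exchangeR (scaleK c k) = c * exchangeR k := by
  unfold exchangeR
  have hpt : ∀ p : E3 × E3,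
      ‖scaleK c k p.1 p.2‖ ^ 2 / dist p.1 p.2
        = c ^ 7 * (‖k (c • p.1) (c • p.2)‖ ^ 2 / dist (c • p.1) (c • p.2)) := by
    intro p
    rw [norm_scaleK hc, dist_smul₀, Real.norm_eq_abs, abs_of_pos hc]
    rcases eq_or_ne (dist p.1 p.2) 0 with h0 | h0
    · simp [h0]
    · field_simp
  rw [integral_congr_ae (ae_of_all _ hpt), integral_const_mul,
    int6' (fun q => ‖k q.1 q.2‖ ^ 2 / dist q.1 q.2) hc]
  field_simp

lemma hasFDerivAt_scaleK {c : ℝ} (k : E3 → E3 → ℂ) (hk : IsSqrtDM k) (y x : E3) :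
    HasFDerivAt (fun r => scaleK c k r y)
      ((c ^ 4 : ℝ) • fderiv ℝ (fun r => k r (c • y)) (c • x)) x := by
  have hsc : ((c : ℂ) ^ 3) • (c • fderiv ℝ (fun r => k r (c • y)) (c • x))
      = (c ^ 4 : ℝ) • fderiv ℝ (fun r => k r (c • y)) (c • x) := by
    ext v
    simp only [ContinuousLinearMap.coe_smul', Pi.smul_apply, smul_eq_mul,
      Complex.real_smul]
    push_cast
    ring
  rw [← hsc]
  have h1 : HasFDerivAt (fun r : E3 => c • r)
      (c • ContinuousLinearMap.id ℝ E3) x := (hasFDerivAt_id x).const_smul c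
  have h2 : HasFDerivAt (fun r => k r (c • y))
      (fderiv ℝ (fun r => k r (c • y)) (c • x)) (c • x) :=
    ((hk.diff (c • y)) (c • x)).hasFDerivAt
  have h3 := h2.comp x h1
  have h4 : (fderiv ℝ (fun r => k r (c • y)) (c • x)).comp
      (c • ContinuousLinearMap.id ℝ E3) = c • fderiv ℝ (fun r => k r (c • y)) (c • x) := by
    ext v
    simp
  rw [h4] at h3
  exact h3.const_mul _

lemma norm_fderiv_scaleK {c : ℝ} (hc : 0 < c) (k : E3 → E3 → ℂ) (hk : IsSqrtDM k)
    (y x : E3) :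
    ‖fderiv ℝ (fun r => scaleK c k r y) x‖ ^ 2
      = c ^ 8 * ‖fderiv ℝ (fun r => k r (c • y)) (c • x)‖ ^ 2 := by
  rw [(hasFDerivAt_scaleK k hk y x).fderiv,
    norm_smul (c ^ 4 : ℝ) (fderiv ℝ (fun r => k r (c • y)) (c • x)),
    Real.norm_eq_abs, abs_of_nonneg (by positivity : (0:ℝ) ≤ c ^ 4)]
  ring

lemma kineticR_scaleK {c : ℝ} (hc : 0 < c) (k : E3 → E3 → ℂ) (hk : IsSqrtDM k) :
    kineticR (scaleK c k) = c ^ 2 * kineticR k := by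
  unfold kineticR
  calc ∫ p : E3 × E3, ‖fderiv ℝ (fun r => scaleK c k r p.2) p.1‖ ^ 2
      = ∫ p : E3 × E3, c ^ 8 * ‖fderiv ℝ (fun r => k r (c • p.2)) (c • p.1)‖ ^ 2 :=
        integral_congr_ae (ae_of_all _ fun p => norm_fderiv_scaleK hc k hk p.2 p.1)
    _ = c ^ 8 * ∫ p : E3 × E3, ‖fderiv ℝ (fun r => k r (c • p.2)) (c • p.1)‖ ^ 2 :=
        integral_const_mul _ _
    _ = c ^ 8 * ((c ^ 6)⁻¹ * ∫ p : E3 × E3, ‖fderiv ℝ (fun r => k r p.2) p.1‖ ^ 2) := by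
        rw [int6' (fun q => ‖fderiv ℝ (fun r => k r q.2) q.1‖ ^ 2) hc]
    _ = c ^ 2 * ∫ p : E3 × E3, ‖fderiv ℝ (fun r => k r p.2) p.1‖ ^ 2 := by
        field_simp

lemma quasiMeasurePreserving_smul {c : ℝ} (hc : c ≠ 0) :
    Measure.QuasiMeasurePreserving (fun x : E3 => c • x) volume volume := by
  refine ⟨measurable_const_smul c, ?_⟩
  rw [MeasureTheory.Measure.map_addHaar_smul volume hc]
  exact MeasureTheory.Measure.smul_absolutelyContinuous

lemma isSqrtDM_scaleK {c : ℝ} (hc : 0 < c) (k : E3 → E3 → ℂ) (hk : IsSqrtDM k) :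
    IsSqrtDM (scaleK c k) := by
  constructor
  · intro r r'
    rw [scaleK, scaleK, hk.herm (c • r) (c • r'), map_mul]
    congr 1
    rw [← Complex.ofReal_pow, Complex.conj_ofReal]
  · exact ((hk.hs.comp_smul hc.ne').const_mul (c ^ 6)).congr
      (ae_of_all _ fun p => (norm_scaleK hc k p.1 p.2).symm)
  · exact ((hk.kin.comp_smul hc.ne').const_mul (c ^ 8)).congr
      (ae_of_all _ fun p => (norm_fderiv_scaleK hc k hk p.2 p.1).symm)
  · intro r'
    exact fun x => ((hasFDerivAt_scaleK k hk r' x).differentiableAt)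
  · intro f hf
    -- the transported test function
    set g : E3 → ℂ := fun u => f (c⁻¹ • u) with hg
    have hc' : (c : ℝ)⁻¹ ≠ 0 := inv_ne_zero hc.ne'
    have hgm : AEStronglyMeasurable g volume :=
      hf.aestronglyMeasurable.comp_quasiMeasurePreserving
        (quasiMeasurePreserving_smul hc')
    have hfint : Integrable (fun r : E3 => ‖f r‖ ^ 2) :=
      (memLp_two_iff_integrable_sq_norm hf.aestronglyMeasurable).mp hf
    have hgint : Integrable (fun u : E3 => ‖g u‖ ^ 2) := by
      have := hfint.comp_smul (R := c⁻¹) hc'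
      exact this
    have hgL2 : MemLp g 2 volume :=
      (memLp_two_iff_integrable_sq_norm hgm).mpr hgint
    have hle := hk.le_one g hgL2
    -- identify the inner integrals
    have hinner : ∀ s : E3,
        (∫ r' : E3, scaleK c k s r' * f r') = ∫ u : E3, k (c • s) u * g u := by
      intro s
      have h1 : ∀ r' : E3, scaleK c k s r' * f r'
          = (c : ℂ) ^ 3 * (k (c • s) (c • r') * g (c • r')) := by
        intro r'
        rw [hg]
        simp only [scaleK]
        rw [smul_smul, inv_mul_cancel₀ hc.ne', one_smul]
        ring
      calc (∫ r' : E3, scaleK c k s r' * f r')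
          = ∫ r' : E3, (c : ℂ) ^ 3 * (k (c • s) (c • r') * g (c • r')) :=
            integral_congr_ae (ae_of_all _ h1)
        _ = (c : ℂ) ^ 3 * ∫ r' : E3, k (c • s) (c • r') * g (c • r') :=
            integral_const_mul _ _
        _ = (c : ℂ) ^ 3 * (((c ^ 3)⁻¹ : ℝ) • ∫ u : E3, k (c • s) u * g u) := by
            rw [int3C (fun u => k (c • s) u * g u) hc]
        _ = ∫ u : E3, k (c • s) u * g u := by
            rw [Complex.real_smul, ← mul_assoc, Complex.ofReal_inv, Complex.ofReal_pow,
              mul_inv_cancel₀ (pow_ne_zero 3 (Complex.ofReal_ne_zero.mpr hc.ne')), one_mul]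
    -- rewrite the LHS by scaling
    have hLHS : (∫ s : E3, ‖∫ r' : E3, scaleK c k s r' * f r'‖ ^ 2)
        = (c ^ 3)⁻¹ * ∫ t : E3, ‖∫ u : E3, k t u * g u‖ ^ 2 := by
      calc (∫ s : E3, ‖∫ r' : E3, scaleK c k s r' * f r'‖ ^ 2)
          = ∫ s : E3, ‖∫ u : E3, k (c • s) u * g u‖ ^ 2 := by
            refine integral_congr_ae (ae_of_all _ fun s => ?_)
            dsimp only
            rw [hinner s]
        _ = (c ^ 3)⁻¹ * ∫ t : E3, ‖∫ u : E3, k t u * g u‖ ^ 2 :=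
            int3' (fun t => ‖∫ u : E3, k t u * g u‖ ^ 2) hc
    have hRHS : (∫ u : E3, ‖g u‖ ^ 2) = c ^ 3 * ∫ r : E3, ‖f r‖ ^ 2 := by
      have := MeasureTheory.Measure.integral_comp_inv_smul_of_nonneg
        (volume : Measure E3) (fun r => ‖f r‖ ^ 2) hc.le
      simpa [hg, finrank_E3, smul_eq_mul] using this
    rw [hLHS]
    rw [hRHS] at hle
    calc (c ^ 3)⁻¹ * ∫ t : E3, ‖∫ u : E3, k t u * g u‖ ^ 2
        ≤ (c ^ 3)⁻¹ * (c ^ 3 * ∫ r : E3, ‖f r‖ ^ 2) := by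
          apply mul_le_mul_of_nonneg_left hle
          positivity
      _ = ∫ r : E3, ‖f r‖ ^ 2 := by field_simp

lemma coulombV_atom (Z : ℝ) (r : E3) :
    coulombV (fun _ : Fin 1 => Z) (fun _ => 0) r = Z / ‖r‖ := by
  simp [coulombV]

lemma EMhat_scaleK {c : ℝ} (hc : 0 < c) (Z : ℝ) (k : E3 → E3 → ℂ) (hk : IsSqrtDM k) :
    EMhat (fun _ : Fin 1 => Z) (fun _ => 0) (scaleK c k)
      = (1 / 2) * (c ^ 2 * kineticR k) - c * (∫ r : E3, Z / ‖r‖ * rhoF k r)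
        + c * dirD (rhoF k) (rhoF k) - c * exchangeR k + (1 / 8) * traceR k := by
  unfold EMhat
  rw [kineticR_scaleK hc k hk, traceR_scaleK hc k, dirD_scaleK hc k, exchangeR_scaleK hc k]
  have : (∫ r : E3, coulombV (fun _ : Fin 1 => Z) (fun _ => 0) r * rhoF (scaleK c k) r)
      = c * ∫ r : E3, Z / ‖r‖ * rhoF k r := by
    rw [show (fun r : E3 => coulombV (fun _ : Fin 1 => Z) (fun _ => 0) r * rhoF (scaleK c k) r)
        = fun r : E3 => Z / ‖r‖ * rhoF (scaleK c k) r by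
      funext r; rw [coulombV_atom]]
    exact coulomb_scaleK hc Z k
  rw [this]

/-- Virial theorem for the atomic Müller functional: if `γ` is a minimizer of the relaxed
atomic problem (one nucleus of charge `Z` at the origin), then
`2 · (1/2) Tr(-∇²γ) = Tr(Z |r|⁻¹ γ) - D(ρ_γ,ρ_γ) + X(γ^{1/2})`. -/
theorem virial_theorem (Z : ℝ) (hZ : 0 < Z) (N : ℝ) (hN : 0 < N)
    (k : E3 → E3 → ℂ) (hk : IsSqrtDM k) (htr : traceR k ≤ N)
    (hmin : ∀ k' : E3 → E3 → ℂ, IsSqrtDM k' → traceR k' ≤ N →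
      EMhat (fun _ : Fin 1 => Z) (fun _ => 0) k ≤
        EMhat (fun _ : Fin 1 => Z) (fun _ => 0) k') :
    2 * ((1 / 2) * kineticR k) =
      (∫ r : E3, Z / ‖r‖ * rhoF k r) - dirD (rhoF k) (rhoF k) + exchangeR k := by
  classical
  set A : ℝ := (1 / 2) * kineticR k with hAdef
  set V : ℝ := ∫ r : E3, Z / ‖r‖ * rhoF k r with hVdef
  set D : ℝ := dirD (rhoF k) (rhoF k) with hDdef
  set X : ℝ := exchangeR k with hXdef
  have hA : 0 ≤ A := by
    rw [hAdef]
    have : 0 ≤ kineticR k := integral_nonneg fun p => by positivity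
    linarith
  set B : ℝ := -V + D - X with hBdef
  -- scaling inequality
  have hineq : ∀ c : ℝ, 0 < c → A + B ≤ c ^ 2 * A + c * B := by
    intro c hc
    have h1 := hmin (scaleK c k) (isSqrtDM_scaleK hc k hk)
      (by rw [traceR_scaleK hc k]; exact htr)
    rw [EMhat_scaleK hc Z k hk] at h1
    have h2 : EMhat (fun _ : Fin 1 => Z) (fun _ => 0) k
        = A + B + (1 / 8) * traceR k := by
      unfold EMhat
      have : (∫ r : E3, coulombV (fun _ : Fin 1 => Z) (fun _ => 0) r * rhoF k r) = V := by
        rw [hVdef, show (fun r : E3 => coulombV (fun _ : Fin 1 => Z) (fun _ => 0) r * rhoF k r)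
            = fun r : E3 => Z / ‖r‖ * rhoF k r by
          funext r; rw [coulombV_atom]]
      rw [this, hAdef, hBdef, hVdef, hDdef, hXdef]
      ring
    rw [h2] at h1
    nlinarith [h1]
  -- conclude 2A + B = 0
  have hkey : 2 * A + B = 0 := by
    have hup : ∀ ε : ℝ, 0 < ε → ε < 1 → |2 * A + B| ≤ ε * A := by
      intro ε hε0 hε1
      have hplus := hineq (1 + ε) (by linarith)
      have hminus := hineq (1 - ε) (by linarith)
      rw [abs_le]
      constructor <;> nlinarith
    by_contra hne
    have hpos : 0 < |2 * A + B| := abs_pos.mpr hne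
    have hhalf := hup (1 / 2) (by norm_num) (by norm_num)
    set ε : ℝ := |2 * A + B| / (2 * (A + 1)) with hεdef
    have hε0 : 0 < ε := by
      apply div_pos hpos
      linarith
    have hε1 : ε < 1 := by
      rw [hεdef, div_lt_one (by linarith : (0:ℝ) < 2 * (A + 1))]
      nlinarith
    have := hup ε hε0 hε1
    rw [hεdef] at this
    rw [div_mul_eq_mul_div, le_div_iff₀ (by linarith : (0:ℝ) < 2 * (A + 1))] at this
    nlinarith
  show 2 * A = V - D + X
  rw [hBdef] at hkey
  linarith


end
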